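/- Semantic soundness of the EvtSet rule: let ℰ₀, …, ℰₙ be events, pre, pst ⊆ S, R, G ⊆ S × S, and for each i ≤ n let presᵢ, pstsᵢ ⊆ S and Rsᵢ, Gsᵢ ⊆ S × S. If (1) ⊨ ℰᵢ sat ⟨presᵢ, Rsᵢ, Gsᵢ, pstsᵢ⟩ for all i ≤ n, (2) pstsᵢ ⊆ presⱼ for all i, j ≤ n, (3) pre ⊆ presᵢ for all i ≤ n, (4) R ⊆ Rsᵢ for all i ≤ n, (5) Gsᵢ ⊆ G for all i ≤ n, (6) pstsᵢ ⊆ pst for all i ≤ n, (7) stable(pre, R), and (8) Id ⊆ G, then ⊨ EvtSys {ℰ₀,…,ℰₙ} sat ⟨pre,R,G,pst⟩. -/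

import Mathlib

set_option autoImplicit false

namespace PiCore

/-! ## Syntax of PiCore -/

/-- PiCore programs; `term` is the terminated program `⊥`. -/
inductive Prog (S : Type) : Type where
  | term : Prog S
  | basic : (S → S) → Prog S
  | seq : Prog S → Prog S → Prog S
  | cond : Set S → Prog S → Prog S → Prog S
  | while' : Set S → Prog S → Prog S
  | await : Set S → Prog S → Prog S
  | nondt : Set (S × S) → Prog S

/-! ## Small-step semantics of programs -/

mutual
/-- Small-step program semantics `(P, s) -c→ (P', s')`. -/
inductive PStep {S : Type} : Prog S × S → Prog S × S → Prop where
  | basic (f : S → S) (s : S) : PStep (.basic f, s) (.term, f s)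
  | seq1 {P₁ : Prog S} {s s' : S} (P₂ : Prog S) :
      PStep (P₁, s) (.term, s') → PStep (.seq P₁ P₂, s) (P₂, s')
  | seq2 {P₁ P₁' : Prog S} {s s' : S} (P₂ : Prog S) :
      PStep (P₁, s) (P₁', s') → P₁' ≠ .term → PStep (.seq P₁ P₂, s) (.seq P₁' P₂, s')
  | condT {b : Set S} {s : S} (P₁ P₂ : Prog S) : s ∈ b → PStep (.cond b P₁ P₂, s) (P₁, s)
  | condF {b : Set S} {s : S} (P₁ P₂ : Prog S) : s ∉ b → PStep (.cond b P₁ P₂, s) (P₂, s)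
  | whileT {b : Set S} {s : S} (P : Prog S) : s ∈ b →
      PStep (.while' b P, s) (.seq P (.while' b P), s)
  | whileF {b : Set S} {s : S} (P : Prog S) : s ∉ b → PStep (.while' b P, s) (.term, s)
  | await {b : Set S} {s s' : S} {P : Prog S} : s ∈ b →
      PStepStar (P, s) (.term, s') → PStep (.await b P, s) (.term, s')
  | nondt {r : Set (S × S)} {s s' : S} : (s, s') ∈ r → PStep (.nondt r, s) (.term, s')

/-- Reflexive transitive closure of `PStep`. -/
inductive PStepStar {S : Type} : Prog S × S → Prog S × S → Prop where
  | refl (c : Prog S × S) : PStepStar c c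
  | step {c c' c'' : Prog S × S} : PStep c c' → PStepStar c' c'' → PStepStar c c''
end

/-! ## Events, event systems, parallel event systems -/

/-- A basic event: a label, a guard and a body. -/
structure EvtSpec (L S : Type) : Type where
  label : L
  guard : Set S
  body : Prog S

/-- Events: basic (non-triggered) events and anonymous (triggered) events. -/
inductive Event (L S : Type) : Type where
  | basic : EvtSpec L S → Event L S
  | anony : Prog S → Event L S

/-- Event contexts. -/
abbrev EvtCtx (L S K : Type) := K → Event L S

/-- The action component of a transition label: a program action `c`
or the occurrence of an event. -/
inductive Act (L S : Type) : Type where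
  | cmd : Act L S
  | evt : Event L S → Act L S

/-- Transition labels `t@κ`. -/
abbrev Lbl (L S K : Type) := Act L S × K

/-- Configurations at the level of events. -/
abbrev EConf (L S K : Type) := Event L S × S × EvtCtx L S K

/-- Labelled transitions of events. -/
inductive EStep {L S K : Type} [DecidableEq K] :
    EConf L S K → Lbl L S K → EConf L S K → Prop where
  | anony {P P' : Prog S} {s s' : S} (x : EvtCtx L S K) (κ : K) :
      PStep (P, s) (P', s') → EStep (.anony P, s, x) (.cmd, κ) (.anony P', s', x)
  | basic (α : EvtSpec L S) {s : S} (x : EvtCtx L S K) (κ : K) : s ∈ α.guard →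
      EStep (.basic α, s, x) (.evt (.basic α), κ)
        (.anony α.body, s, Function.update x κ (.basic α))

/-- Event systems: a finite event set `{ℰ₀, …, ℰₙ}` or a sequence `EvtSeq ℰ 𝒮`. -/
inductive EvtSys (L S : Type) : Type where
  | set : (n : ℕ) → (Fin (n + 1) → Event L S) → EvtSys L S
  | seq : Event L S → EvtSys L S → EvtSys L S

/-- Configurations at the level of event systems. -/
abbrev ESConf (L S K : Type) := EvtSys L S × S × EvtCtx L S K

/-- Labelled transitions of event systems. -/
inductive ESStep {L S K : Type} [DecidableEq K] :
    ESConf L S K → Lbl L S K → ESConf L S K → Prop where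
  | set {n : ℕ} {es : Fin (n + 1) → Event L S} (i : Fin (n + 1))
      {s s' : S} {x x' : EvtCtx L S K} {e' : Event L S} {κ : K} :
      EStep (es i, s, x) (.evt (es i), κ) (e', s', x') →
      ESStep (.set n es, s, x) (.evt (es i), κ) (.seq e' (.set n es), s', x')
  | seq1 {e e' : Event L S} (𝒮 : EvtSys L S) {s s' : S} {x x' : EvtCtx L S K}
      {l : Lbl L S K} :
      EStep (e, s, x) l (e', s', x') → e' ≠ .anony .term →
      ESStep (.seq e 𝒮, s, x) l (.seq e' 𝒮, s', x')
  | seq2 {e : Event L S} (𝒮 : EvtSys L S) {s s' : S} {x x' : EvtCtx L S K}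
      {l : Lbl L S K} :
      EStep (e, s, x) l (.anony .term, s', x') →
      ESStep (.seq e 𝒮, s, x) l (𝒮, s', x')

/-- Parallel event systems. -/
abbrev PES (L S K : Type) := K → EvtSys L S

/-- Configurations at the level of parallel event systems. -/
abbrev PConf (L S K : Type) := PES L S K × S × EvtCtx L S K

/-- Labelled transitions of parallel event systems. -/
inductive PESStep {L S K : Type} [DecidableEq K] :
    PConf L S K → Lbl L S K → PConf L S K → Prop where
  | par {ps : PES L S K} {κ : K} {t : Act L S} {s s' : S} {x x' : EvtCtx L S K}
      {es' : EvtSys L S} :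
      ESStep (ps κ, s, x) (t, κ) (es', s', x') →
      PESStep (ps, s, x) (t, κ) (Function.update ps κ es', s', x')

/-! ## Computations -/

section Computation

variable {σ S X : Type}

/-- An environment transition between two configurations:
the specification component is unchanged. -/
def EnvTr (c c' : σ × S × X) : Prop := c.1 = c'.1

/-- Computations: nonempty lists of configurations in which every consecutive pair
is an environment transition or an action transition of the semantics. -/
inductive Comp (step : σ × S × X → σ × S × X → Prop) : List (σ × S × X) → Prop where
  | one (c : σ × S × X) : Comp step [c]
  | env {sp : σ} {s₁ s₂ : S} {x₁ x₂ : X} {cs : List (σ × S × X)} :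
      Comp step ((sp, s₁, x₁) :: cs) → Comp step ((sp, s₂, x₂) :: (sp, s₁, x₁) :: cs)
  | act {c c' : σ × S × X} {cs : List (σ × S × X)} :
      step c c' → Comp step (c' :: cs) → Comp step (c :: c' :: cs)

/-- `Ψ(♯, s, x)`: the computations starting in the configuration `(♯, s, x)`. -/
def cpts (step : σ × S × X → σ × S × X → Prop) (sp : σ) (s : S) (x : X) :
    Set (List (σ × S × X)) :=
  {ϖ | Comp step ϖ ∧ ϖ.head? = some (sp, s, x)}

/-- The assumption `A(pre, R)`. -/
def Assum (pre : Set S) (R : Set (S × S)) : Set (List (σ × S × X)) :=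
  {ϖ | (∀ c, ϖ.head? = some c → c.2.1 ∈ pre) ∧
    ∀ i c c', ϖ[i]? = some c → ϖ[i + 1]? = some c' → EnvTr c c' →
      (c.2.1, c'.2.1) ∈ R}

/-- The commitment `C(G, pst)` (`fin` tells when a specification is terminated). -/
def Commit (step : σ × S × X → σ × S × X → Prop) (fin : σ → Prop)
    (G : Set (S × S)) (pst : Set S) : Set (List (σ × S × X)) :=
  {ϖ | (∀ i c c', ϖ[i]? = some c → ϖ[i + 1]? = some c' → step c c' →
      (c.2.1, c'.2.1) ∈ G) ∧
    ∀ c, ϖ.getLast? = some c → fin c.1 → c.2.1 ∈ pst}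

end Computation

/-! ## Validity of rely-guarantee specifications -/

section Validity

variable {L S K : Type}

/-- Program action transitions lifted to configurations with a trivial event context. -/
def pstepL {S : Type} (c c' : Prog S × S × Unit) : Prop :=
  PStep (c.1, c.2.1) (c'.1, c'.2.1)

/-- Action transitions of events (any label). -/
def estepAny [DecidableEq K] (c c' : EConf L S K) : Prop := ∃ l, EStep c l c'

/-- Action transitions of event systems (any label). -/
def esstepAny [DecidableEq K] (c c' : ESConf L S K) : Prop := ∃ l, ESStep c l c'

/-- Action transitions of parallel event systems (any label). -/
def pesstepAny [DecidableEq K] (c c' : PConf L S K) : Prop := ∃ l, PESStep c l c'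

/-- A terminated program. -/
def progFin : Prog S → Prop := fun P => P = .term

/-- A terminated event. -/
def evtFin : Event L S → Prop := fun e => e = .anony .term

/-- Event systems have no terminated form. -/
def esysFin : EvtSys L S → Prop := fun _ => False

/-- Parallel event systems have no terminated form. -/
def pesFin : PES L S K → Prop := fun _ => False

/-- Validity `⊨ P sat ⟨pre, R, G, pst⟩` for programs. -/
def progValid (P : Prog S) (pre : Set S) (R G : Set (S × S)) (pst : Set S) : Prop :=
  ∀ s : S, cpts pstepL P s () ∩ Assum pre R ⊆ Commit pstepL progFin G pst

/-- Validity `⊨ ℰ sat ⟨pre, R, G, pst⟩` for events. -/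
def evtValid [DecidableEq K] (e : Event L S) (pre : Set S) (R G : Set (S × S))
    (pst : Set S) : Prop :=
  ∀ (s : S) (x : EvtCtx L S K),
    cpts estepAny e s x ∩ Assum pre R ⊆ Commit estepAny evtFin G pst

/-- Validity `⊨ 𝒮 sat ⟨pre, R, G, pst⟩` for event systems. -/
def esysValid [DecidableEq K] (es : EvtSys L S) (pre : Set S) (R G : Set (S × S))
    (pst : Set S) : Prop :=
  ∀ (s : S) (x : EvtCtx L S K),
    cpts esstepAny es s x ∩ Assum pre R ⊆ Commit esstepAny esysFin G pst

/-- Validity `⊨ 𝒫𝒮 sat ⟨pre, R, G, pst⟩` for parallel event systems. -/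
def pesValid [DecidableEq K] (ps : PES L S K) (pre : Set S) (R G : Set (S × S))
    (pst : Set S) : Prop :=
  ∀ (s : S) (x : EvtCtx L S K),
    cpts pesstepAny ps s x ∩ Assum pre R ⊆ Commit pesstepAny pesFin G pst

end Validity

/-! ## The rely-guarantee proof system -/

/-- Specifications: programs, events, event systems, or parallel event systems. -/
inductive Spec (L S K : Type) : Type where
  | prog : Prog S → Spec L S K
  | evt : Event L S → Spec L S K
  | esys : EvtSys L S → Spec L S K
  | pes : PES L S K → Spec L S K

/-- A specification that is not a parallel event system. -/
def Spec.noPar {L S K : Type} : Spec L S K → Prop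
  | .pes _ => False
  | _ => True

/-- Uniform validity `⊨ ♯ sat ⟨pre, R, G, pst⟩`. -/
def RGValid {L S K : Type} [DecidableEq K] :
    Spec L S K → Set S → Set (S × S) → Set (S × S) → Set S → Prop
  | .prog P, pre, R, G, pst => progValid P pre R G pst
  | .evt e, pre, R, G, pst => evtValid (K := K) e pre R G pst
  | .esys es, pre, R, G, pst => esysValid (K := K) es pre R G pst
  | .pes ps, pre, R, G, pst => pesValid ps pre R G pst

/-- `stable f g`. -/
def stable {α : Type} (f : Set α) (g : Set (α × α)) : Prop :=
  ∀ x y, x ∈ f → (x, y) ∈ g → y ∈ f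

/-- The identity relation on a state space. -/
def idRel {S : Type} : Set (S × S) := {p | p.1 = p.2}

/-- The rely-guarantee proof system `⊢ ♯ sat ⟨pre, R, G, pst⟩`. -/
inductive RGDeriv {L S K : Type} [DecidableEq K] :
    Spec L S K → Set S → Set (S × S) → Set (S × S) → Set S → Prop where
  | basic {f : S → S} {pre pst : Set S} {R G : Set (S × S)} :
      pre ⊆ {s | f s ∈ pst} →
      {p : S × S | p.1 ∈ pre ∧ p.2 = f p.1} ⊆ G →
      stable pre R → stable pst R →
      RGDeriv (.prog (.basic f)) pre R G pst
  | seq {P Q : Prog S} {pre m pst : Set S} {R G : Set (S × S)} :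
      RGDeriv (.prog P) pre R G m → RGDeriv (.prog Q) m R G pst →
      RGDeriv (.prog (.seq P Q)) pre R G pst
  | cond {b : Set S} {P₁ P₂ : Prog S} {pre pst : Set S} {R G : Set (S × S)} :
      RGDeriv (.prog P₁) (pre ∩ b) R G pst →
      RGDeriv (.prog P₂) (pre ∩ bᶜ) R G pst →
      stable pre R → idRel ⊆ G →
      RGDeriv (.prog (.cond b P₁ P₂)) pre R G pst
  | whileR {b : Set S} {P : Prog S} {pre pst : Set S} {R G : Set (S × S)} :
      RGDeriv (.prog P) (pre ∩ b) R G pre →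
      pre ∩ bᶜ ⊆ pst →
      stable pre R → stable pst R → idRel ⊆ G →
      RGDeriv (.prog (.while' b P)) pre R G pst
  | awaitR {b : Set S} {P : Prog S} {pre pst : Set S} {R G : Set (S × S)} :
      (∀ V : S, RGDeriv (.prog P) (pre ∩ b ∩ {V}) idRel Set.univ
        ({s | (V, s) ∈ G} ∩ pst)) →
      stable pre R → stable pst R →
      RGDeriv (.prog (.await b P)) pre R G pst
  | nondt {r : Set (S × S)} {pre pst : Set S} {R G : Set (S × S)} :
      pre ⊆ {s | (∀ s', (s, s') ∈ r → s' ∈ pst) ∧ ∃ s', (s, s') ∈ r} →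
      {p : S × S | p.1 ∈ pre ∧ p ∈ r} ⊆ G →
      stable pre R → stable pst R →
      RGDeriv (.prog (.nondt r)) pre R G pst
  | conseq {sp : Spec L S K} {pre pre' pst pst' : Set S} {R R' G G' : Set (S × S)} :
      sp.noPar →
      pre ⊆ pre' → R ⊆ R' → G' ⊆ G → pst' ⊆ pst →
      RGDeriv sp pre' R' G' pst' →
      RGDeriv sp pre R G pst
  | unPre {P : Prog S} {pre pre' pst : Set S} {R G : Set (S × S)} :
      RGDeriv (.prog P) pre R G pst → RGDeriv (.prog P) pre' R G pst →
      RGDeriv (.prog P) (pre ∪ pre') R G pst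
  | intPost {P : Prog S} {pre pst pst' : Set S} {R G : Set (S × S)} :
      RGDeriv (.prog P) pre R G pst → RGDeriv (.prog P) pre R G pst' →
      RGDeriv (.prog P) pre R G (pst ∩ pst')
  | univPre {P : Prog S} {pre pst : Set S} {R G : Set (S × S)} :
      (∀ v ∈ pre, RGDeriv (.prog P) {v} R G pst) →
      RGDeriv (.prog P) pre R G pst
  | emptyPre {P : Prog S} {pst : Set S} {R G : Set (S × S)} :
      RGDeriv (.prog P) ∅ R G pst
  | inner {P : Prog S} {pre pst : Set S} {R G : Set (S × S)} :
      RGDeriv (.prog P) pre R G pst →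
      RGDeriv (.evt (.anony P)) pre R G pst
  | basicEvt {α : EvtSpec L S} {pre pst : Set S} {R G : Set (S × S)} :
      RGDeriv (.prog α.body) (pre ∩ α.guard) R G pst →
      stable pre R → idRel ⊆ G →
      RGDeriv (.evt (.basic α)) pre R G pst
  | evtSeq {e : Event L S} {𝒮 : EvtSys L S} {pre m pst : Set S} {R G : Set (S × S)} :
      RGDeriv (.evt e) pre R G m → RGDeriv (.esys 𝒮) m R G pst →
      RGDeriv (.esys (.seq e 𝒮)) pre R G pst
  | evtSet {n : ℕ} {es : Fin (n + 1) → Event L S} {pre pst : Set S}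
      {R G : Set (S × S)} {pres psts : Fin (n + 1) → Set S}
      {Rs Gs : Fin (n + 1) → Set (S × S)} :
      (∀ i, RGDeriv (.evt (es i)) (pres i) (Rs i) (Gs i) (psts i)) →
      (∀ i j, psts i ⊆ pres j) →
      (∀ i, pre ⊆ pres i) → (∀ i, psts i ⊆ pst) →
      (∀ i, R ⊆ Rs i) → (∀ i, Gs i ⊆ G) →
      stable pre R → idRel ⊆ G →
      RGDeriv (.esys (.set n es)) pre R G pst
  | par {ps : PES L S K} {pre pst : Set S} {R G : Set (S × S)}
      {pres psts : K → Set S} {Rs Gs : K → Set (S × S)} :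
      (∀ κ, RGDeriv (.esys (ps κ)) (pres κ) (Rs κ) (Gs κ) (psts κ)) →
      (∀ κ, pre ⊆ pres κ) → (∀ κ, psts κ ⊆ pst) →
      (∀ κ, Gs κ ⊆ G) → (∀ κ, R ⊆ Rs κ) →
      (∀ κ κ', κ ≠ κ' → Gs κ ⊆ Rs κ') →
      RGDeriv (.pes ps) pre R G pst


/-! ## Serialization and compositionality machinery -/

/-- The set of events occurring syntactically in an event system. -/
def EvtSys.evts {L S : Type} : EvtSys L S → Set (Event L S)
  | .set _ es => Set.range es
  | .seq e 𝒮 => insert e 𝒮.evts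

/-- Similarity (simulation) of two computations, possibly over different
specification types: same length, and at each position the states and event
contexts coincide and the steps are the same labelled action transitions
(resp. environment transitions). -/
def Similar {σ₁ σ₂ S X Λ : Type}
    (st₁ : σ₁ × S × X → Λ → σ₁ × S × X → Prop)
    (st₂ : σ₂ × S × X → Λ → σ₂ × S × X → Prop)
    (w₁ : List (σ₁ × S × X)) (w₂ : List (σ₂ × S × X)) : Prop :=
  w₁.length = w₂.length ∧
  ∀ i c₁ c₁' c₂ c₂', w₁[i]? = some c₁ → w₁[i + 1]? = some c₁' →
    w₂[i]? = some c₂ → w₂[i + 1]? = some c₂' →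
    c₁.2.1 = c₂.2.1 ∧ c₁.2.2 = c₂.2.2 ∧
    (∀ δ, st₁ c₁ δ c₁' ↔ st₂ c₂ δ c₂') ∧
    (EnvTr c₁ c₁' ↔ EnvTr c₂ c₂')

/-- The computations of an event (from an arbitrary initial state and
event context). -/
def cptsOfEvt {L S K : Type} [DecidableEq K] (e : Event L S) :
    Set (List (EConf L S K)) :=
  {w | Comp estepAny w ∧ ∃ s x, w.head? = some (e, s, x)}

/-- A computation `w` of a parallel event system and a family `cf` of
computations of event systems conjoin, `w ∝ cf` (Definition 2). -/
def Conjoin {L S K : Type} [DecidableEq K] (w : List (PConf L S K))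
    (cf : K → List (ESConf L S K)) : Prop :=
  (∀ κ, (cf κ).length = w.length) ∧
  (∀ (κ : K) (j : ℕ) c c', w[j]? = some c → (cf κ)[j]? = some c' →
    c.2.1 = c'.2.1 ∧ c.2.2 = c'.2.2 ∧ c.1 κ = c'.1) ∧
  (∀ (j : ℕ) c c', w[j]? = some c → w[j + 1]? = some c' →
    (EnvTr c c' ∧
      ∀ κ d d', (cf κ)[j]? = some d → (cf κ)[j + 1]? = some d' → EnvTr d d') ∨
    (∃ (t : Act L S) (κ₁ : K), PESStep c (t, κ₁) c' ∧
      (∀ d d', (cf κ₁)[j]? = some d → (cf κ₁)[j + 1]? = some d' →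
        ESStep d (t, κ₁) d') ∧
      (∀ κ, κ ≠ κ₁ → ∀ d d', (cf κ)[j]? = some d → (cf κ)[j + 1]? = some d' →
        EnvTr d d')))


/-! ## Auxiliary lemmas for the soundness proof -/

section AuxSound

theorem pstep_ne {S : Type} (P : Prog S) : ∀ {s P' s'}, PStep (P, s) (P', s') → P' ≠ P := by
  induction P with
  | term => intro s P' s' h; cases h
  | basic f => intro s P' s' h; cases h; exact fun hEq => nomatch hEq
  | seq P₁ P₂ ih₁ ih₂ =>
    intro s P' s' h
    cases h with
    | seq1 _ _ =>
      intro hEq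
      have h1 : sizeOf (Prog.seq P₁ P₂) = 1 + sizeOf P₁ + sizeOf P₂ := rfl
      have h2 := congrArg sizeOf hEq
      omega
    | seq2 _ hs hne =>
      intro hEq
      injection hEq with a b
      exact ih₁ hs a
  | cond b P₁ P₂ ih₁ ih₂ =>
    intro s P' s' h
    cases h with
    | condT _ _ _ =>
      intro hEq
      have h1 : sizeOf (Prog.cond b P₁ P₂) = 1 + sizeOf b + sizeOf P₁ + sizeOf P₂ := rfl
      have h2 := congrArg sizeOf hEq
      omega
    | condF _ _ _ =>
      intro hEq
      have h1 : sizeOf (Prog.cond b P₁ P₂) = 1 + sizeOf b + sizeOf P₁ + sizeOf P₂ := rfl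
      have h2 := congrArg sizeOf hEq
      omega
  | while' b P ih =>
    intro s P' s' h
    cases h with
    | whileT _ _ => exact fun hEq => nomatch hEq
    | whileF _ _ => exact fun hEq => nomatch hEq
  | await b P ih => intro s P' s' h; cases h; exact fun hEq => nomatch hEq
  | nondt r => intro s P' s' h; cases h; exact fun hEq => nomatch hEq

theorem estep_ne {L S K : Type} [DecidableEq K] {e e' : Event L S} {s s' : S}
    {x x' : EvtCtx L S K} {l : Lbl L S K} (h : EStep (e, s, x) l (e', s', x')) : e' ≠ e := by
  cases h with
  | anony x κ hp => intro hEq; injection hEq with q; exact pstep_ne _ hp q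
  | basic α x κ hg => exact fun hEq => nomatch hEq

theorem esys_ne_seq {L S : Type} (e : Event L S) (𝒮 : EvtSys L S) : 𝒮 ≠ .seq e 𝒮 := by
  intro h
  have h2 := congrArg sizeOf h
  simp at h2

theorem esstep_ne {L S K : Type} [DecidableEq K] {a a' : EvtSys L S} {s s' : S}
    {x x' : EvtCtx L S K} {l : Lbl L S K} (h : ESStep (a, s, x) l (a', s', x')) : a' ≠ a := by
  cases h with
  | set i h => exact fun hEq => nomatch hEq
  | seq1 𝒮 hstep hne => intro hEq; injection hEq with q r; exact estep_ne hstep q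
  | seq2 𝒮 hstep => exact esys_ne_seq _ _

theorem head?_append_of_head? {α : Type _} {l : List α} {a : α} (h : l.head? = some a)
    (l' : List α) : (l ++ l').head? = some a := by
  cases l <;> simp_all

theorem pairs_singleton {α : Type _} (P : α → α → Prop) (a : α) :
    ∀ j c c', [a][j]? = some c → [a][j+1]? = some c' → P c c' := by
  intro j c c' _ h2
  simp [List.getElem?_cons_succ] at h2

theorem pairs_cons {α : Type _} {P : α → α → Prop} {a : α} {l : List α}
    (h : ∀ j c c', (a :: l)[j]? = some c → (a :: l)[j+1]? = some c' → P c c') :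
    ∀ j c c', l[j]? = some c → l[j+1]? = some c' → P c c' := by
  intro j c c' h1 h2
  exact h (j+1) c c' (by simpa using h1) (by simpa using h2)

theorem cons_pairs {α : Type _} {P : α → α → Prop} {a b : α} {l : List α} (hab : P a b)
    (h : ∀ j c c', (b :: l)[j]? = some c → (b :: l)[j+1]? = some c' → P c c') :
    ∀ j c c', (a :: b :: l)[j]? = some c → (a :: b :: l)[j+1]? = some c' → P c c' := by
  intro j c c' h1 h2
  cases j with
  | zero =>
    simp only [List.getElem?_cons_zero, Option.some.injEq] at h1
    simp only [List.getElem?_cons_succ, List.getElem?_cons_zero, Option.some.injEq] at h2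
    subst h1; subst h2; exact hab
  | succ j => exact h j c c' (by simpa using h1) (by simpa using h2)

theorem pairs_concat {α : Type _} {P : α → α → Prop} {l : List α} {a d : α}
    (h : ∀ j c c', l[j]? = some c → l[j+1]? = some c' → P c c')
    (hl : l.getLast? = some a) (hd : P a d) :
    ∀ j c c', (l ++ [d])[j]? = some c → (l ++ [d])[j+1]? = some c' → P c c' := by
  have hnil : l ≠ [] := by rintro rfl; simp at hl
  have h1len : 0 < l.length := List.length_pos_iff.mpr hnil
  intro j c c' hc hc'
  rcases lt_trichotomy (j+1) l.length with hlt | heq | hgt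
  · rw [List.getElem?_append_left (by omega)] at hc
    rw [List.getElem?_append_left hlt] at hc'
    exact h j c c' hc hc'
  · rw [List.getElem?_append_left (by omega)] at hc
    have hj : j = l.length - 1 := by omega
    have hlast : l[j]? = some a := by
      rw [hj, ← List.getLast?_eq_getElem?]; exact hl
    rw [hc] at hlast
    have hc'2 : (l ++ [d])[j+1]? = some d := by
      rw [heq]; exact List.getElem?_concat_length
    rw [hc'] at hc'2
    injection hlast with hlast
    injection hc'2 with hc'2
    rw [hlast, hc'2]
    exact hd
  · have hnone : (l ++ [d])[j+1]? = none := List.getElem?_eq_none (by simp; omega)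
    rw [hc'] at hnone; exact nomatch hnone

theorem comp_concat {σ S X : Type} {step : σ × S × X → σ × S × X → Prop} :
    ∀ {w : List (σ × S × X)}, Comp step w → ∀ {c d : σ × S × X}, w.getLast? = some c →
      (step c d ∨ c.1 = d.1) → Comp step (w ++ [d]) := by
  intro w hw
  induction hw with
  | one c₀ =>
    intro c d hlast hcd
    have hc : c = c₀ := by
      have h0 : [c₀].getLast? = some c₀ := rfl
      rw [h0] at hlast; injection hlast with h; exact h.symm
    subst hc
    rcases hcd with hs | he
    · exact Comp.act hs (Comp.one d)
    · obtain ⟨sp, s1, x1⟩ := c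
      obtain ⟨sp2, s2, x2⟩ := d
      simp only at he
      subst he
      exact Comp.env (Comp.one _)
  | env htail ih =>
    rename_i sp s₁ s₂ x₁ x₂ cs
    intro c d hlast hcd
    rw [List.getLast?_cons_cons] at hlast
    have hres := ih hlast hcd
    simp only [List.cons_append] at hres ⊢
    exact Comp.env hres
  | act hstep htail ih =>
    rename_i c₁ c₂ cs
    intro c d hlast hcd
    rw [List.getLast?_cons_cons] at hlast
    have hres := ih hlast hcd
    simp only [List.cons_append] at hres ⊢
    exact Comp.act hstep hres

/-- A computation of the event `e0` made of `R0`-environment steps and action steps,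
starting in `pre0` and currently at configuration `c`. -/
def GoodEvtCpt {L S K : Type} [DecidableEq K] (e0 : Event L S) (pre0 : Set S)
    (R0 : Set (S × S)) (c : EConf L S K) : Prop :=
  ∃ p : List (EConf L S K), Comp estepAny p ∧
    (∃ s₀ x₀, p.head? = some (e0, s₀, x₀) ∧ s₀ ∈ pre0) ∧
    p.getLast? = some c ∧
    (∀ j a a', p[j]? = some a → p[j+1]? = some a' → EnvTr a a' → (a.2.1, a'.2.1) ∈ R0)

theorem step_commit {L S K : Type} [DecidableEq K] {e0 : Event L S}
    {pre0 pst0 : Set S} {R0 G0 : Set (S × S)}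
    (hv : evtValid (K := K) e0 pre0 R0 G0 pst0)
    {e e' : Event L S} {s s' : S} {x x' : EvtCtx L S K} {l : Lbl L S K}
    (hg : GoodEvtCpt e0 pre0 R0 (e, s, x))
    (hstep : EStep (e, s, x) l (e', s', x')) :
    (s, s') ∈ G0 ∧ (evtFin e' → s' ∈ pst0) ∧ GoodEvtCpt e0 pre0 R0 (e', s', x') := by
  obtain ⟨p, hp, ⟨s₀, x₀, hh, hs₀⟩, hlast, henv⟩ := hg
  have hnil : p ≠ [] := by rintro rfl; simp at hh
  have hlen : 0 < p.length := List.length_pos_iff.mpr hnil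
  have hcomp' : Comp estepAny (p ++ [(e', s', x')]) :=
    comp_concat hp hlast (Or.inl ⟨l, hstep⟩)
  have henv' : ∀ j a a', (p ++ [(e', s', x')])[j]? = some a →
      (p ++ [(e', s', x')])[j+1]? = some a' → EnvTr a a' → (a.2.1, a'.2.1) ∈ R0 :=
    pairs_concat henv hlast (fun h => absurd h.symm (estep_ne hstep))
  have hhead' : (p ++ [(e', s', x')]).head? = some (e0, s₀, x₀) :=
    head?_append_of_head? hh _
  have hcommit := hv s₀ x₀ (a := p ++ [(e', s', x')])
    ⟨⟨hcomp', hhead'⟩, fun c hc => by rw [hhead'] at hc; cases hc; exact hs₀, henv'⟩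
  obtain ⟨hact, hfin⟩ := hcommit
  have hidx : (p ++ [(e', s', x')])[p.length - 1]? = some (e, s, x) := by
    rw [List.getElem?_append_left (by omega), ← List.getLast?_eq_getElem?]
    exact hlast
  have hidx' : (p ++ [(e', s', x')])[(p.length - 1) + 1]? = some (e', s', x') := by
    have heq : p.length - 1 + 1 = p.length := by omega
    rw [heq]
    exact List.getElem?_concat_length
  have hG : (s, s') ∈ G0 := hact (p.length - 1) _ _ hidx hidx' ⟨l, hstep⟩
  exact ⟨hG, fun hterm => hfin _ (List.getLast?_concat) hterm,
    p ++ [(e', s', x')], hcomp', ⟨s₀, x₀, hhead', hs₀⟩, List.getLast?_concat, henv'⟩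

/-- The invariant along a computation of the event set. -/
def InvC {L S K : Type} [DecidableEq K] (n : ℕ) (es : Fin (n + 1) → Event L S)
    (pres : Fin (n + 1) → Set S) (Rs : Fin (n + 1) → Set (S × S))
    (c : ESConf L S K) : Prop :=
  (c.1 = .set n es ∧ ∀ i, GoodEvtCpt (es i) (pres i) (Rs i) (es i, c.2.1, c.2.2)) ∨
  (∃ i e, c.1 = .seq e (.set n es) ∧ GoodEvtCpt (es i) (pres i) (Rs i) (e, c.2.1, c.2.2))

theorem evtset_aux {L S K : Type} [DecidableEq K]
    {n : ℕ} {es : Fin (n + 1) → Event L S} {R G : Set (S × S)}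
    {pres psts : Fin (n + 1) → Set S} {Rs Gs : Fin (n + 1) → Set (S × S)}
    (h1 : ∀ i, evtValid (K := K) (es i) (pres i) (Rs i) (Gs i) (psts i))
    (h2 : ∀ i j, psts i ⊆ pres j)
    (h4 : ∀ i, R ⊆ Rs i)
    (h5 : ∀ i, Gs i ⊆ G) :
    ∀ w : List (ESConf L S K), Comp esstepAny w →
      (∀ j c c', w[j]? = some c → w[j+1]? = some c' → EnvTr c c' → (c.2.1, c'.2.1) ∈ R) →
      (∀ c0, w.head? = some c0 → InvC n es pres Rs c0) →
      ∀ j c c', w[j]? = some c → w[j+1]? = some c' → esstepAny c c' → (c.2.1, c'.2.1) ∈ G := by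
  intro w hw
  induction hw with
  | one c =>
    intro _ _
    exact pairs_singleton _ c
  | env htail ih =>
    rename_i sp s₁ s₂ x₁ x₂ cs
    intro hEnv hInv
    have hR : (s₂, s₁) ∈ R := hEnv 0 (sp, s₂, x₂) (sp, s₁, x₁) (by simp) (by simp) rfl
    have hInv₂ : InvC n es pres Rs (sp, s₁, x₁) := by
      have h0 := hInv (sp, s₂, x₂) rfl
      rcases h0 with ⟨hsp, hA⟩ | ⟨i, e, hsp, hB⟩
      · refine Or.inl ⟨hsp, fun i => ?_⟩
        obtain ⟨p, hp, ⟨s₀, x₀, hh, hs₀⟩, hlast, henv⟩ := hA i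
        exact ⟨p ++ [(es i, s₁, x₁)], comp_concat hp hlast (Or.inr rfl),
          ⟨s₀, x₀, head?_append_of_head? hh _, hs₀⟩, List.getLast?_concat,
          pairs_concat henv hlast (fun _ => h4 i hR)⟩
      · obtain ⟨p, hp, ⟨s₀, x₀, hh, hs₀⟩, hlast, henv⟩ := hB
        exact Or.inr ⟨i, e, hsp, p ++ [(e, s₁, x₁)], comp_concat hp hlast (Or.inr rfl),
          ⟨s₀, x₀, head?_append_of_head? hh _, hs₀⟩, List.getLast?_concat,
          pairs_concat henv hlast (fun _ => h4 i hR)⟩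
    have ihres := ih (pairs_cons hEnv)
      (fun c0 hc0 => by
        have hc : c0 = (sp, s₁, x₁) := by injection hc0 with h; exact h.symm
        rw [hc]; exact hInv₂)
    refine cons_pairs ?_ ihres
    rintro ⟨l, hl⟩
    exact absurd rfl (esstep_ne hl)
  | act hstep htail ih =>
    rename_i c c' cs
    intro hEnv hInv
    obtain ⟨sp, s, x⟩ := c
    obtain ⟨sp', s', x'⟩ := c'
    obtain ⟨l, hl⟩ := hstep
    have hInv0 := hInv (sp, s, x) rfl
    have key : (s, s') ∈ G ∧ InvC n es pres Rs (sp', s', x') := by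
      rcases hInv0 with ⟨hsp, hA⟩ | ⟨i, e, hsp, hB⟩
      · simp only at hsp
        subst hsp
        cases hl with
        | set i hE =>
          rename_i e'' κ
          obtain ⟨hG, _, hgood⟩ := step_commit (h1 i) (hA i) hE
          exact ⟨h5 i hG, Or.inr ⟨i, e'', rfl, hgood⟩⟩
      · simp only at hsp
        subst hsp
        cases hl with
        | seq1 _ hE hne =>
          rename_i e''
          obtain ⟨hG, _, hgood⟩ := step_commit (h1 i) hB hE
          exact ⟨h5 i hG, Or.inr ⟨i, e'', rfl, hgood⟩⟩
        | seq2 _ hE =>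
          obtain ⟨hG, hfin, _⟩ := step_commit (h1 i) hB hE
          have hpst : s' ∈ psts i := hfin rfl
          refine ⟨h5 i hG, Or.inl ⟨rfl, fun j => ?_⟩⟩
          exact ⟨[(es j, s', x')], Comp.one _, ⟨s', x', rfl, h2 i j hpst⟩, rfl,
            pairs_singleton _ _⟩
    have ihres := ih (pairs_cons hEnv)
      (fun c0 hc0 => by
        have hc : c0 = (sp', s', x') := by injection hc0 with h; exact h.symm
        rw [hc]; exact key.2)
    exact cons_pairs (fun _ => key.1) ihres

end AuxSound

/-- **Semantic soundness of the EvtSet rule.** -/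
theorem evtset_rule_sound {L S K : Type} [DecidableEq K]
    (n : ℕ) (es : Fin (n + 1) → Event L S) (pre pst : Set S) (R G : Set (S × S))
    (pres psts : Fin (n + 1) → Set S) (Rs Gs : Fin (n + 1) → Set (S × S))
    (h1 : ∀ i, evtValid (K := K) (es i) (pres i) (Rs i) (Gs i) (psts i))
    (h2 : ∀ i j, psts i ⊆ pres j)
    (h3 : ∀ i, pre ⊆ pres i)
    (h4 : ∀ i, R ⊆ Rs i)
    (h5 : ∀ i, Gs i ⊆ G)
    (h6 : ∀ i, psts i ⊆ pst)
    (h7 : stable pre R)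
    (h8 : idRel ⊆ G) :
    esysValid (K := K) (EvtSys.set n es) pre R G pst := by
  intro s x w hw
  obtain ⟨⟨hcomp, hhead⟩, hpre, henv⟩ := hw
  refine ⟨?_, fun c _ hfin => hfin.elim⟩
  refine evtset_aux h1 h2 h4 h5 w hcomp henv (fun c0 hc0 => ?_)
  rw [hhead] at hc0
  have hc : c0 = (EvtSys.set n es, s, x) := by injection hc0 with h; exact h.symm
  rw [hc]
  refine Or.inl ⟨rfl, fun i => ?_⟩
  exact ⟨[(es i, s, x)], Comp.one _, ⟨s, x, rfl, h3 i (hpre _ hhead)⟩, rfl,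
    pairs_singleton _ _⟩

end PiCore
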